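/- Let s be a generalized n-series over a commutative ring R. For all a, b ∈ ℕ, the ideal of R generated by s(gcd(a,b)) equals the ideal generated by s(a) and s(b). -/
import Mathlib

/-- If `d ∣ n` then `s d ∣ s n` for a generalized n-series. -/
lemma GNS_dvd {R : Type*} [CommRing R] (s : ℕ → R)
    (h0 : s 0 = 0)
    (hdvd : ∀ n k : ℕ, 0 < k → k < n → s (n - k) ∣ s n - s k)
    {d n : ℕ} (h : d ∣ n) : s d ∣ s n := by
  rcases Nat.eq_zero_or_pos d with rfl | hd
  · obtain rfl : n = 0 := Nat.eq_zero_of_zero_dvd h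
    exact dvd_rfl
  obtain ⟨m, rfl⟩ := h
  induction m with
  | zero => simp [h0]
  | succ m ih =>
    rcases Nat.eq_zero_or_pos m with rfl | hm
    · simp
    have hlt : d * m < d * (m + 1) := by nlinarith
    have hpos : 0 < d * m := Nat.mul_pos hd hm
    have h1 : s d ∣ s (d * (m + 1)) - s (d * m) := by
      have := hdvd (d * (m + 1)) (d * m) hpos hlt
      have heq : d * (m + 1) - d * m = d := by ring_nf; omega
      rwa [heq] at this
    have := dvd_add h1 ih
    simpa using this

/-- helper: `s m ∣ s n - s (n % m)` when `0 < n % m` and `m ≤ n`. -/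
lemma GNS_mod_sub {R : Type*} [CommRing R] (s : ℕ → R)
    (h0 : s 0 = 0)
    (hdvd : ∀ n k : ℕ, 0 < k → k < n → s (n - k) ∣ s n - s k)
    {m n : ℕ} (hm : 0 < m) (hmn : m ≤ n) (hr : 0 < n % m) :
    s m ∣ s n - s (n % m) := by
  have hlt : n % m < n := lt_of_lt_of_le (Nat.mod_lt n hm) hmn
  have h1 : s (n - n % m) ∣ s n - s (n % m) := hdvd n (n % m) hr hlt
  have h2 : s m ∣ s (n - n % m) :=
    GNS_dvd s h0 hdvd (Nat.dvd_sub_mod n)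
  exact h2.trans h1

/-- For a generalized n-series `s`, the ideal generated by `s (gcd a b)` equals the
ideal generated by `s a` and `s b`. -/
theorem GNS_gcd {R : Type*} [CommRing R] (s : ℕ → R)
    (h0 : s 0 = 0)
    (hreg : ∀ n : ℕ, 0 < n → s n ∈ nonZeroDivisors R)
    (hdvd : ∀ n k : ℕ, 0 < k → k < n → s (n - k) ∣ s n - s k)
    (a b : ℕ) :
    Ideal.span {s (Nat.gcd a b)} = Ideal.span {s a, s b} := by
  induction a, b using Nat.gcd.induction with
  | H0 b =>
    rw [Nat.gcd_zero_left, show ({s 0, s b} : Set R) = insert (s 0) {s b} from rfl,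
      Ideal.span_insert, h0]
    simp [Ideal.span_singleton_eq_bot.mpr rfl]
  | H1 m n hm ih =>
    rw [Nat.gcd_rec, ih]
    -- goal : span {s (n % m), s m} = span {s m, s n}
    apply le_antisymm
    · rw [Ideal.span_le]
      intro x hx
      rcases hx with rfl | rfl
      · -- s (n % m) ∈ span {s m, s n}
        rcases Nat.eq_zero_or_pos (n % m) with hr | hr
        · rw [hr, h0]; exact Ideal.zero_mem _
        rcases lt_or_ge n m with hnm | hnm
        · rw [Nat.mod_eq_of_lt hnm]
          exact Ideal.subset_span (by simp)
        · obtain ⟨c, hc⟩ := GNS_mod_sub s h0 hdvd hm hnm hr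
          rw [SetLike.mem_coe, Ideal.mem_span_pair]
          exact ⟨-c, 1, by rw [one_mul]; rw [sub_eq_iff_eq_add] at hc; rw [hc]; ring⟩
      · exact Ideal.subset_span (by simp)
    · rw [Ideal.span_le]
      intro x hx
      rcases hx with rfl | rfl
      · exact Ideal.subset_span (by simp)
      · -- s n ∈ span {s (n % m), s m}
        rcases Nat.eq_zero_or_pos (n % m) with hr | hr
        · have hmn : m ∣ n := Nat.dvd_of_mod_eq_zero hr
          obtain ⟨c, hc⟩ := GNS_dvd s h0 hdvd hmn
          rw [SetLike.mem_coe, Ideal.mem_span_pair]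
          exact ⟨0, c, by rw [hc]; ring⟩
        rcases lt_or_ge n m with hnm | hnm
        · rw [Nat.mod_eq_of_lt hnm]
          exact Ideal.subset_span (by simp)
        · obtain ⟨c, hc⟩ := GNS_mod_sub s h0 hdvd hm hnm hr
          rw [SetLike.mem_coe, Ideal.mem_span_pair]
          exact ⟨1, c, by rw [one_mul]; rw [sub_eq_iff_eq_add] at hc; rw [hc]; ring⟩
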